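/- Let μ be a finite Borel measure on [0, ∞) with μ((0, ∞)) > 0, and define f : [0, ∞) → [0, ∞) by f(t) = ∫₀^∞ e^{−t u} dμ(u). Then for every positive integer n, the function d_f(x, y) = f(0) − f(‖x − y‖) is a metric on ℝ^n (where ‖·‖ is the Euclidean norm), and this metric is bounded: d_f(x, y) ≤ μ([0, ∞)) for all x, y ∈ ℝ^n. -/

import Mathlib

open MeasureTheory

/-- A real-valued distance function is a metric. -/
def IsMetricDist {X : Type*} (ρ : X → X → ℝ) : Prop :=
  (∀ x y, 0 ≤ ρ x y) ∧ (∀ x y, ρ x y = 0 ↔ x = y) ∧ (∀ x y, ρ x y = ρ y x) ∧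
  (∀ x y z, ρ x z ≤ ρ x y + ρ y z)

/-- let `μ` be a finite Borel measure on `[0,∞)` with `μ((0,∞)) > 0` and let
`f t = ∫ e^{-t u} dμ(u)` be its Laplace transform. Then for every positive `n`, the function
`d_f(x,y) = f 0 - f ‖x - y‖` is a metric on `ℝ^n`, bounded by `μ([0,∞))`. -/
theorem laplace_transform_bounded_metric (μ : Measure ℝ) [IsFiniteMeasure μ]
    (hsupp : μ (Set.Iio 0) = 0) (hpos : 0 < μ (Set.Ioi 0))
    (f : ℝ → ℝ) (hf : ∀ t : ℝ, f t = ∫ u, Real.exp (-(t * u)) ∂μ)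
    (n : ℕ) (hn : 0 < n) :
    IsMetricDist (fun x y : EuclideanSpace ℝ (Fin n) => f 0 - f ‖x - y‖) ∧
    ∀ x y : EuclideanSpace ℝ (Fin n), f 0 - f ‖x - y‖ ≤ (μ (Set.Ici 0)).toReal := by
  have hae : ∀ᵐ u ∂μ, 0 ≤ u := by
    rw [ae_iff]
    simpa [not_le, Set.Iio] using hsupp
  have hint : ∀ t : ℝ, 0 ≤ t → Integrable (fun u => Real.exp (-(t * u))) μ := by
    intro t ht
    refine (integrable_const (1 : ℝ)).mono' ?_ ?_
    · exact (Real.continuous_exp.comp (continuous_const.mul continuous_id).neg).aestronglyMeasurable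
    · filter_upwards [hae] with u hu
      rw [Real.norm_eq_abs, abs_of_pos (Real.exp_pos _)]
      exact Real.exp_le_one_iff.mpr (neg_nonpos.mpr (mul_nonneg ht hu))
  have hmono : ∀ s t : ℝ, 0 ≤ s → s ≤ t → f t ≤ f s := by
    intro s t hs hst
    rw [hf, hf]
    refine integral_mono_ae (hint t (hs.trans hst)) (hint s hs) ?_
    filter_upwards [hae] with u hu
    exact Real.exp_le_exp.mpr (by nlinarith)
  have hfnonneg : ∀ t : ℝ, 0 ≤ f t := by
    intro t
    rw [hf]
    exact integral_nonneg fun u => (Real.exp_pos _).le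
  -- strict positivity
  have hstrict : ∀ t : ℝ, 0 < t → 0 < f 0 - f t := by
    intro t ht
    have hsubint : f 0 - f t = ∫ u, (1 - Real.exp (-(t * u))) ∂μ := by
      rw [hf, hf, integral_sub (integrable_const 1) (hint t ht.le)]
      simp
    rw [hsubint]
    have hnn : 0 ≤ᵐ[μ] fun u => (1 : ℝ) - Real.exp (-(t * u)) := by
      filter_upwards [hae] with u hu
      have h1 : Real.exp (-(t * u)) ≤ 1 :=
        Real.exp_le_one_iff.mpr (neg_nonpos.mpr (mul_nonneg ht.le hu))
      simp only [Pi.zero_apply]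
      linarith
    have hintg : Integrable (fun u => (1 : ℝ) - Real.exp (-(t * u))) μ :=
      (integrable_const 1).sub (hint t ht.le)
    rw [integral_pos_iff_support_of_nonneg_ae hnn hintg]
    refine lt_of_lt_of_le hpos (measure_mono ?_)
    intro u hu
    have hu' : (0 : ℝ) < u := hu
    have hlt : Real.exp (-(t * u)) < 1 :=
      Real.exp_lt_one_iff.mpr (by nlinarith)
    simp only [Function.mem_support]
    intro h
    rw [sub_eq_zero] at h
    linarith
  -- subadditivity
  have hsub : ∀ s t : ℝ, 0 ≤ s → 0 ≤ t →
      f 0 - f (s + t) ≤ (f 0 - f s) + (f 0 - f t) := by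
    intro s t hs ht
    have h1 := hint s hs
    have h2 := hint t ht
    have h3 := hint (s + t) (add_nonneg hs ht)
    have key : f s + f t ≤ f 0 + f (s + t) := by
      rw [hf, hf, hf, hf, ← integral_add h1 h2, ← integral_add (hint 0 le_rfl) h3]
      refine integral_mono_ae (h1.add h2) ((hint 0 le_rfl).add h3) ?_
      filter_upwards [hae] with u hu
      have e1 : Real.exp (-(s * u)) ≤ 1 :=
        Real.exp_le_one_iff.mpr (neg_nonpos.mpr (mul_nonneg hs hu))
      have e2 : Real.exp (-(t * u)) ≤ 1 :=
        Real.exp_le_one_iff.mpr (neg_nonpos.mpr (mul_nonneg ht hu))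
      have hprod : Real.exp (-((s + t) * u)) = Real.exp (-(s * u)) * Real.exp (-(t * u)) := by
        rw [← Real.exp_add]; ring_nf
      simp only [zero_mul, neg_zero, Real.exp_zero]
      nlinarith [mul_nonneg (sub_nonneg.mpr e1) (sub_nonneg.mpr e2)]
    linarith
  -- the bound
  have hIci : μ (Set.Ici (0 : ℝ)) = μ Set.univ := by
    refine le_antisymm (measure_mono (Set.subset_univ _)) ?_
    calc μ Set.univ = μ (Set.Iio 0 ∪ Set.Ici 0) := by rw [Set.Iio_union_Ici]
      _ ≤ μ (Set.Iio 0) + μ (Set.Ici 0) := measure_union_le _ _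
      _ = μ (Set.Ici 0) := by rw [hsupp, zero_add]
  have hf0 : f 0 = (μ Set.univ).toReal := by
    rw [hf]
    simp [integral_const]
    rfl
  refine ⟨⟨?_, ?_, ?_, ?_⟩, ?_⟩
  · intro x y
    dsimp only
    have := hmono 0 ‖x - y‖ le_rfl (norm_nonneg _)
    linarith
  · intro x y
    dsimp only
    constructor
    · intro h
      by_contra hxy
      have hd : 0 < ‖x - y‖ := norm_pos_iff.mpr (sub_ne_zero.mpr hxy)
      have := hstrict _ hd
      linarith
    · intro h; subst h; simp
  · intro x y
    dsimp only
    rw [norm_sub_rev]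
  · intro x y z
    dsimp only
    have htri : ‖x - z‖ ≤ ‖x - y‖ + ‖y - z‖ := norm_sub_le_norm_sub_add_norm_sub x y z
    have h1 : f (‖x - y‖ + ‖y - z‖) ≤ f ‖x - z‖ := hmono _ _ (norm_nonneg _) htri
    have h2 := hsub ‖x - y‖ ‖y - z‖ (norm_nonneg _) (norm_nonneg _)
    linarith
  · intro x y
    rw [hIci]
    have := hfnonneg ‖x - y‖
    linarith [hf0 ▸ le_refl ((μ Set.univ).toReal)]
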